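/- Let I, J be finite types, A, A', B, B' expectations on I × J, and E1, E2 arbitrary functions on matrices over I and J respectively. If A - A' is positive semidefinite, B' - B is positive semidefinite, and qRHL(A, E1, E2, B) holds, then qRHL(A', E1, E2, B') holds. [Rule Conseq] -/

import Mathlib

open Matrix Kronecker ComplexOrder

noncomputable section

/-- Partial trace over the second factor: `tr₂(ρ) i i' = ∑ j, ρ (i,j) (i',j)`. -/
def trB {I J : Type*} [Fintype J] (ρ : Matrix (I × J) (I × J) ℂ) : Matrix I I ℂ :=
  Matrix.of fun i i' => ∑ j, ρ (i, j) (i', j)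

/-- Partial trace over the first factor: `tr₁(ρ) j j' = ∑ i, ρ (i,j) (i,j')`. -/
def trA {I J : Type*} [Fintype I] (ρ : Matrix (I × J) (I × J) ℂ) : Matrix J J ℂ :=
  Matrix.of fun j j' => ∑ i, ρ (i, j) (i, j')

/-- `ρ` is separable iff it is a finite sum of Kronecker products of
positive semidefinite matrices. -/
def Separable {I J : Type*} [Fintype I] [Fintype J]
    (ρ : Matrix (I × J) (I × J) ℂ) : Prop :=
  ∃ (n : ℕ) (σ : Fin n → Matrix I I ℂ) (τ : Fin n → Matrix J J ℂ),
    (∀ k, (σ k).PosSemidef) ∧ (∀ k, (τ k).PosSemidef) ∧ ρ = ∑ k, σ k ⊗ₖ τ k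

/-- The expectation-qRHL judgment `qRHL(A, E1, E2, B)`. -/
def qRHL {I J : Type*} [Fintype I] [Fintype J]
    (A : Matrix (I × J) (I × J) ℂ)
    (E1 : Matrix I I ℂ → Matrix I I ℂ) (E2 : Matrix J J ℂ → Matrix J J ℂ)
    (B : Matrix (I × J) (I × J) ℂ) : Prop :=
  ∀ ρ : Matrix (I × J) (I × J) ℂ, ρ.PosSemidef → Separable ρ →
    ∃ ρ' : Matrix (I × J) (I × J) ℂ, ρ'.PosSemidef ∧ Separable ρ' ∧
      trB ρ' = E1 (trB ρ) ∧ trA ρ' = E2 (trA ρ) ∧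
      (Matrix.trace (A * ρ)).re ≤ (Matrix.trace (B * ρ')).re

lemma trace_re_nonneg_of_posSemidef {n : Type*} [Fintype n] {M ρ : Matrix n n ℂ}
    (hM : M.PosSemidef) (hρ : ρ.PosSemidef) : 0 ≤ (Matrix.trace (M * ρ)).re := by
  classical
  obtain ⟨C, hC⟩ : ∃ C : Matrix n n ℂ, M = Cᴴ * C := by
    open scoped MatrixOrder in
    exact CStarAlgebra.nonneg_iff_eq_star_mul_self.mp hM.nonneg
  have h1 : Matrix.trace (M * ρ) = Matrix.trace (C * ρ * Cᴴ) := by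
    rw [hC, Matrix.mul_assoc, Matrix.trace_mul_comm, Matrix.mul_assoc]
  have h2 : (C * ρ * Cᴴ).PosSemidef := hρ.mul_mul_conjTranspose_same C
  rw [h1, Matrix.trace, Complex.re_sum]
  apply Finset.sum_nonneg
  intro i _
  have h3 : 0 ≤ (C * ρ * Cᴴ) i i := by
    exact h2.diag_nonneg
  exact (Complex.le_def.mp h3).1

/-- Rule Conseq: pre-expectations may be weakened and post-expectations
strengthened. -/
theorem qRHL_conseq {I J : Type*} [Fintype I] [Fintype J]
    (A A' B B' : Matrix (I × J) (I × J) ℂ)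
    (hA : A.PosSemidef) (hA' : A'.PosSemidef) (hB : B.PosSemidef) (hB' : B'.PosSemidef)
    (E1 : Matrix I I ℂ → Matrix I I ℂ) (E2 : Matrix J J ℂ → Matrix J J ℂ)
    (hAA' : (A - A').PosSemidef) (hBB' : (B' - B).PosSemidef)
    (h : qRHL A E1 E2 B) :
    qRHL A' E1 E2 B' := by
  intro ρ hρ hsep
  obtain ⟨ρ', hρ', hsep', htrB, htrA, hle⟩ := h ρ hρ hsep
  refine ⟨ρ', hρ', hsep', htrB, htrA, ?_⟩
  have h1 : (Matrix.trace (A' * ρ)).re ≤ (Matrix.trace (A * ρ)).re := by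
    have := trace_re_nonneg_of_posSemidef hAA' hρ
    rw [Matrix.sub_mul, Matrix.trace_sub, Complex.sub_re] at this
    linarith
  have h2 : (Matrix.trace (B * ρ')).re ≤ (Matrix.trace (B' * ρ')).re := by
    have := trace_re_nonneg_of_posSemidef hBB' hρ'
    rw [Matrix.sub_mul, Matrix.trace_sub, Complex.sub_re] at this
    linarith
  linarith
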